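/- Fix a ∈ ℝ and b ∈ ℂ with b ≠ 0, and set c = 0. If E² = a² + |b|² + 1, then the ℓ²-solution space Sol(a, b, 0, E) is infinite-dimensional. If instead E² ≠ a² + |b|² and E² ≠ a² + |b|² + 1, then Sol(a, b, 0, E) = {0}. -/

import Mathlib

noncomputable section

open scoped ComplexConjugate

/-- The on-site matrix `V` of the local model. -/
def Vmat (a : ℝ) (b c : ℂ) : Matrix (Fin 4) (Fin 4) ℂ :=
  !![(a : ℂ), conj c, 0, conj b;
     c, -(a : ℂ), conj b, 0;
     0, b, (a : ℂ), -c;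
     b, 0, -(conj c), -(a : ℂ)]

/-- The hopping matrix `A` of the local model. -/
def Amat : Matrix (Fin 4) (Fin 4) ℂ :=
  !![0, -1, 0, 0;
     0, 0, 0, 0;
     0, 0, 0, 0;
     0, 0, 1, 0]

/-- `ψ : ℕ → (Fin 4 → ℂ)` (with `ψ n` standing for the value at the site `n + 1` of the
half-line `{1, 2, 3, …}`) solves the half-line eigenvalue equation `(H♯ − E)ψ = 0`:
`(V − E·I)ψ(1) + A*ψ(2) = 0` and `Aψ(n) + (V − E·I)ψ(n+1) + A*ψ(n+2) = 0` for all `n ≥ 1`. -/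
def IsSolSeq (a : ℝ) (b c : ℂ) (E : ℝ) (ψ : ℕ → Fin 4 → ℂ) : Prop :=
  (Vmat a b c - (E : ℂ) • 1).mulVec (ψ 0) + (Amat.conjTranspose).mulVec (ψ 1) = 0 ∧
    ∀ n : ℕ,
      Amat.mulVec (ψ n) + (Vmat a b c - (E : ℂ) • 1).mulVec (ψ (n + 1)) +
        (Amat.conjTranspose).mulVec (ψ (n + 2)) = 0

/-- The `ℓ²` condition: `∑_{n ≥ 1} ‖ψ(n)‖² < ∞`. -/
def IsL2Seq (ψ : ℕ → Fin 4 → ℂ) : Prop :=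
  Summable fun n => ∑ i, ‖ψ n i‖ ^ 2

/-- The space `Sol(a, b, c, E)` of `ℓ²`-solutions of the half-line eigenvalue equation. -/
def Sol (a : ℝ) (b c : ℂ) (E : ℝ) : Set (ℕ → Fin 4 → ℂ) :=
  {ψ | IsSolSeq a b c E ψ ∧ IsL2Seq ψ}

/-- The sequence `e₁` with `e₁(n) = (c^{n−1}, 0, 0, 0)` (convention `0⁰ = 1`). -/
def eSeq₁ (c : ℂ) : ℕ → Fin 4 → ℂ := fun n => ![c ^ n, 0, 0, 0]

/-- The sequence `e₄` with `e₄(n) = (0, 0, 0, c^{n−1})` (convention `0⁰ = 1`). -/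
def eSeq₄ (c : ℂ) : ℕ → Fin 4 → ℂ := fun n => ![0, 0, 0, c ^ n]


section Aux

lemma bdry_iff (a : ℝ) (b : ℂ) (E : ℝ) (u v : Fin 4 → ℂ) :
    (Vmat a b 0 - (E : ℂ) • 1).mulVec u + (Amat.conjTranspose).mulVec v = 0 ↔
      (((a:ℂ) - E) * u 0 + conj b * u 3 = 0 ∧
       (-(a:ℂ) - E) * u 1 + conj b * u 2 - v 0 = 0 ∧
       b * u 1 + ((a:ℂ) - E) * u 2 + v 3 = 0 ∧
       b * u 0 + (-(a:ℂ) - E) * u 3 = 0) := by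
  rw [funext_iff]
  constructor
  · intro h
    refine ⟨?_, ?_, ?_, ?_⟩ <;> [have := h 0; have := h 1; have := h 2; have := h 3] <;>
      simp [Vmat, Amat, Matrix.mulVec, dotProduct, Fin.sum_univ_four,
        Matrix.conjTranspose_apply, Matrix.sub_apply, Matrix.smul_apply, Matrix.one_apply,
        Matrix.vecHead, Matrix.vecTail, show Fin.succ 2 = (3:Fin 4) from rfl,
        show Fin.succ 1 = (2:Fin 4) from rfl, show Fin.succ 0 = (1:Fin 4) from rfl] at this <;>
      linear_combination this
  · rintro ⟨h0, h1, h2, h3⟩ i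
    fin_cases i <;>
      simp [Vmat, Amat, Matrix.mulVec, dotProduct, Fin.sum_univ_four,
        Matrix.conjTranspose_apply, Matrix.sub_apply, Matrix.smul_apply, Matrix.one_apply,
        Matrix.vecHead, Matrix.vecTail, show Fin.succ 2 = (3:Fin 4) from rfl,
        show Fin.succ 1 = (2:Fin 4) from rfl, show Fin.succ 0 = (1:Fin 4) from rfl] <;>
      [linear_combination h0; linear_combination h1; linear_combination h2; linear_combination h3]

lemma int_iff (a : ℝ) (b : ℂ) (E : ℝ) (t u v : Fin 4 → ℂ) :
    Amat.mulVec t + (Vmat a b 0 - (E : ℂ) • 1).mulVec u + (Amat.conjTranspose).mulVec v = 0 ↔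
      (-t 1 + ((a:ℂ) - E) * u 0 + conj b * u 3 = 0 ∧
       (-(a:ℂ) - E) * u 1 + conj b * u 2 - v 0 = 0 ∧
       b * u 1 + ((a:ℂ) - E) * u 2 + v 3 = 0 ∧
       t 2 + b * u 0 + (-(a:ℂ) - E) * u 3 = 0) := by
  rw [funext_iff]
  constructor
  · intro h
    refine ⟨?_, ?_, ?_, ?_⟩ <;> [have := h 0; have := h 1; have := h 2; have := h 3] <;>
      simp [Vmat, Amat, Matrix.mulVec, dotProduct, Fin.sum_univ_four,
        Matrix.conjTranspose_apply, Matrix.sub_apply, Matrix.smul_apply, Matrix.one_apply,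
        Matrix.vecHead, Matrix.vecTail, show Fin.succ 2 = (3:Fin 4) from rfl,
        show Fin.succ 1 = (2:Fin 4) from rfl, show Fin.succ 0 = (1:Fin 4) from rfl] at this <;>
      linear_combination this
  · rintro ⟨h0, h1, h2, h3⟩ i
    fin_cases i <;>
      simp [Vmat, Amat, Matrix.mulVec, dotProduct, Fin.sum_univ_four,
        Matrix.conjTranspose_apply, Matrix.sub_apply, Matrix.smul_apply, Matrix.one_apply,
        Matrix.vecHead, Matrix.vecTail, show Fin.succ 2 = (3:Fin 4) from rfl,
        show Fin.succ 1 = (2:Fin 4) from rfl, show Fin.succ 0 = (1:Fin 4) from rfl] <;>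
      [linear_combination h0; linear_combination h1; linear_combination h2; linear_combination h3]

/-- The compactly supported solution concentrated at sites `k, k+1`. -/
def solSeq (a : ℝ) (b : ℂ) (E : ℝ) (k : ℕ) : ℕ → Fin 4 → ℂ :=
  fun n => ![if n = k + 1 then 1 else 0, if n = k then (a : ℂ) - E else 0,
             if n = k then -b else 0, 0]

lemma conj_mul_self_eq (b : ℂ) : conj b * b = ((‖b‖ : ℝ) ^ 2 : ℂ) := by
  rw [mul_comm, Complex.mul_conj]
  norm_cast
  simp [Complex.normSq_eq_norm_sq]

lemma solSeq_mem (a : ℝ) (b : ℂ) (E : ℝ) (hE : E ^ 2 = a ^ 2 + ‖b‖ ^ 2 + 1) (k : ℕ) :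
    solSeq a b E k ∈ Sol a b 0 E := by
  have hbc : ((E : ℂ)) ^ 2 = (a : ℂ) ^ 2 + ((‖b‖ : ℝ) : ℂ) ^ 2 + 1 := by exact_mod_cast hE
  have hb2 := conj_mul_self_eq b
  constructor
  · constructor
    · rw [bdry_iff]
      refine ⟨?_, ?_, ?_, ?_⟩ <;> simp [solSeq] <;> split_ifs <;>
        first | ring1 | omega | linear_combination hbc - hb2
    · intro n
      rw [int_iff]
      refine ⟨?_, ?_, ?_, ?_⟩ <;> simp [solSeq] <;> split_ifs <;>
        first | ring1 | omega | linear_combination hbc - hb2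
  · apply summable_of_ne_finset_zero (s := Finset.range (k + 2))
    intro n hn
    simp only [Finset.mem_range, not_lt] at hn
    have h1 : n ≠ k + 1 := by omega
    have h2 : n ≠ k := by omega
    simp [solSeq, h1, h2, Fin.sum_univ_four]

lemma sol_zero (a : ℝ) (b : ℂ) (E : ℝ)
    (h1 : E ^ 2 ≠ a ^ 2 + ‖b‖ ^ 2) (h2 : E ^ 2 ≠ a ^ 2 + ‖b‖ ^ 2 + 1) :
    Sol a b 0 E = {0} := by
  have hb2 := conj_mul_self_eq b
  have hD : ((E : ℂ)) ^ 2 - (a : ℂ) ^ 2 - ((‖b‖ : ℝ) : ℂ) ^ 2 ≠ 0 := by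
    intro h
    apply h1
    have : ((E ^ 2 : ℝ) : ℂ) = ((a ^ 2 + ‖b‖ ^ 2 : ℝ) : ℂ) := by push_cast; linear_combination h
    exact_mod_cast this
  have hD1 : ((E : ℂ)) ^ 2 - (a : ℂ) ^ 2 - ((‖b‖ : ℝ) : ℂ) ^ 2 - 1 ≠ 0 := by
    intro h
    apply h2
    have : ((E ^ 2 : ℝ) : ℂ) = ((a ^ 2 + ‖b‖ ^ 2 + 1 : ℝ) : ℂ) := by push_cast; linear_combination h
    exact_mod_cast this
  ext ψ
  simp only [Set.mem_singleton_iff]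
  constructor
  · rintro ⟨⟨hB, hI⟩, -⟩
    rw [bdry_iff] at hB
    obtain ⟨hB0, hB1, hB2, hB3⟩ := hB
    have hIc : ∀ n, _ := fun n => (int_iff a b E _ _ _).1 (hI n)
    have hx0 : ψ 0 0 = 0 := by
      have key : (((E : ℂ)) ^ 2 - (a : ℂ) ^ 2 - ((‖b‖ : ℝ) : ℂ) ^ 2) * ψ 0 0 = 0 := by
        linear_combination (-(a : ℂ) - E) * hB0 - conj b * hB3 + (ψ 0 0) * hb2
      exact (mul_eq_zero.1 key).resolve_left hD
    have hw0 : ψ 0 3 = 0 := by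
      have key : (((E : ℂ)) ^ 2 - (a : ℂ) ^ 2 - ((‖b‖ : ℝ) : ℂ) ^ 2) * ψ 0 3 = 0 := by
        linear_combination (-b) * hB0 + ((a : ℂ) - E) * hB3 + (ψ 0 3) * hb2
      exact (mul_eq_zero.1 key).resolve_left hD
    have hxw : ∀ n, ψ n 0 = 0 ∧ ψ n 3 = 0 := by
      intro n
      match n with
      | 0 => exact ⟨hx0, hw0⟩
      | 1 =>
        obtain ⟨i0, _, _, i3⟩ := hIc 0
        constructor
        · have key : (((E : ℂ)) ^ 2 - (a : ℂ) ^ 2 - ((‖b‖ : ℝ) : ℂ) ^ 2 - 1) * ψ 1 0 = 0 := by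
            linear_combination hB1 - ((a : ℂ) + E) * i0 - conj b * i3 + (ψ 1 0) * hb2
          exact (mul_eq_zero.1 key).resolve_left hD1
        · have key : (((E : ℂ)) ^ 2 - (a : ℂ) ^ 2 - ((‖b‖ : ℝ) : ℂ) ^ 2 - 1) * ψ 1 3 = 0 := by
            linear_combination (-1 : ℂ) * hB2 - b * i0 + ((a : ℂ) - E) * i3 + (ψ 1 3) * hb2
          exact (mul_eq_zero.1 key).resolve_left hD1
      | (m + 2) =>
        obtain ⟨_, j1, j2, _⟩ := hIc m
        obtain ⟨i0, _, _, i3⟩ := hIc (m + 1)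
        constructor
        · have key : (((E : ℂ)) ^ 2 - (a : ℂ) ^ 2 - ((‖b‖ : ℝ) : ℂ) ^ 2 - 1) * ψ (m + 2) 0 = 0 := by
            linear_combination j1 - ((a : ℂ) + E) * i0 - conj b * i3 + (ψ (m + 2) 0) * hb2
          exact (mul_eq_zero.1 key).resolve_left hD1
        · have key : (((E : ℂ)) ^ 2 - (a : ℂ) ^ 2 - ((‖b‖ : ℝ) : ℂ) ^ 2 - 1) * ψ (m + 2) 3 = 0 := by
            linear_combination (-1 : ℂ) * j2 - b * i0 + ((a : ℂ) - E) * i3 + (ψ (m + 2) 3) * hb2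
          exact (mul_eq_zero.1 key).resolve_left hD1
    funext n i
    have hx' := (hxw (n + 1)).1
    have hw' := (hxw (n + 1)).2
    obtain ⟨i0, _, _, i3⟩ := hIc n
    fin_cases i
    · exact (hxw n).1
    · show ψ n 1 = 0
      linear_combination -i0 + ((a : ℂ) - E) * hx' + conj b * hw'
    · show ψ n 2 = 0
      linear_combination i3 - b * hx' + ((a : ℂ) + E) * hw'
    · exact (hxw n).2
  · rintro rfl
    refine ⟨⟨?_, fun n => ?_⟩, ?_⟩
    · rw [bdry_iff]; simp
    · rw [int_iff]; simp
    · simpa [IsL2Seq] using summable_zero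

lemma solSeq_li (a : ℝ) (b : ℂ) (E : ℝ) : LinearIndependent ℂ (solSeq a b E) := by
  rw [linearIndependent_iff']
  intro t g hg k hk
  have := congrFun (congrFun hg (k + 1)) 0
  simp only [Finset.sum_apply, Pi.smul_apply, Pi.zero_apply, smul_eq_mul] at this
  rw [Finset.sum_eq_single k] at this
  · simpa [solSeq] using this
  · intro i _ hik
    have : (k : ℕ) + 1 ≠ i + 1 := by omega
    simp [solSeq, this, Ne.symm hik]
  · intro h; exact absurd hk h

end Aux

/-- Fix `a ∈ ℝ` and `b ∈ ℂ` with `b ≠ 0`, and set `c = 0`. If `E² = a² + |b|² + 1`, then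
the ℓ²-solution space `Sol(a,b,0,E)` is infinite-dimensional (not contained in the span of any
finite set). If instead `E² ≠ a² + |b|²` and `E² ≠ a² + |b|² + 1`, then `Sol(a,b,0,E) = {0}`. -/
theorem stmt8 (a : ℝ) (b : ℂ) (hb : b ≠ 0) (E : ℝ) :
    (E ^ 2 = a ^ 2 + ‖b‖ ^ 2 + 1 →
      ¬ ∃ s : Finset (ℕ → Fin 4 → ℂ),
        Sol a b 0 E ⊆ (Submodule.span ℂ (s : Set (ℕ → Fin 4 → ℂ)) :
          Set (ℕ → Fin 4 → ℂ))) ∧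
    (E ^ 2 ≠ a ^ 2 + ‖b‖ ^ 2 → E ^ 2 ≠ a ^ 2 + ‖b‖ ^ 2 + 1 → Sol a b 0 E = {0}) := by
  constructor
  · intro hE
    rintro ⟨s, hs⟩
    set M := Submodule.span ℂ (s : Set (ℕ → Fin 4 → ℂ)) with hMdef
    have hM : ∀ k, solSeq a b E k ∈ M := fun k => hs (solSeq_mem a b E hE k)
    have hli : LinearIndependent ℂ (fun k => (⟨solSeq a b E k, hM k⟩ : M)) := by
      apply LinearIndependent.of_comp M.subtype
      exact solSeq_li a b E
    exact Module.Finite.not_linearIndependent_of_infinite (ι := ℕ)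
      (v := fun k => (⟨solSeq a b E k, hM k⟩ : M)) hli
  · exact sol_zero a b E
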